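/- Let G be m-fat (n+1)-bottlenecked, and suppose X,Y are connected B-disjoint subsets with B > 2(M+m+1) such that no collection of n balls of radius B meets every X,Y path. If r_1,...,r_{n+1} are vertices such that the m-neighborhood of {r_1,...,r_{n+1}} meets every X,Y path, then d(r_i, r_j) > 2(B - m) for all i ≠ j. -/

import Mathlib

open SimpleGraph

variable {V : Type}

/-- A set of vertices is connected if the induced subgraph is connected. -/
def ConnSet (G : SimpleGraph V) (X : Set V) : Prop := (G.induce X).Connected

/-- `G` is `n`-edge bottlenecked: any two disjoint connected vertex sets `X,Y`
admit a set of at most `n` edges meeting every `X,Y` path. -/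
def EdgeBottlenecked (G : SimpleGraph V) (n : ℕ) : Prop :=
  ∀ X Y : Set V, Disjoint X Y → ConnSet G X → ConnSet G Y →
    ∃ S : Finset (Sym2 V), S.card ≤ n ∧
      ∀ ⦃x y : V⦄ (p : G.Walk x y), x ∈ X → y ∈ Y → p.IsPath → ∃ e ∈ S, e ∈ p.edges

/-- `G` is `n`-point bottlenecked: any two disjoint connected vertex sets `X,Y`
admit a set of at most `n` vertices meeting every `X,Y` path. -/
def PointBottlenecked (G : SimpleGraph V) (n : ℕ) : Prop :=
  ∀ X Y : Set V, Disjoint X Y → ConnSet G X → ConnSet G Y →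
    ∃ S : Finset V, S.card ≤ n ∧
      ∀ ⦃x y : V⦄ (p : G.Walk x y), x ∈ X → y ∈ Y → p.IsPath → ∃ v ∈ S, v ∈ p.support

/-- An `n`-ladder: two disjoint connected poles `X,Y` and `n` rungs, i.e. `X,Y`
paths that are pairwise disjoint outside of `X ∪ Y`. -/
structure Ladder (G : SimpleGraph V) (n : ℕ) where
  X : Set V
  Y : Set V
  disj : Disjoint X Y
  connX : ConnSet G X
  connY : ConnSet G Y
  a : Fin n → V
  b : Fin n → V
  ha : ∀ i, a i ∈ X
  hb : ∀ i, b i ∈ Y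
  p : (i : Fin n) → G.Walk (a i) (b i)
  isPath : ∀ i, (p i).IsPath
  rungsDisj : ∀ i j, i ≠ j → ∀ v, v ∈ (p i).support → v ∈ (p j).support → v ∈ X ∪ Y

/-- `G` contains the dipole `D_k` as a minor: equivalently, `G` contains a `k`-ladder. -/
def HasDipoleMinor (G : SimpleGraph V) (k : ℕ) : Prop := Nonempty (Ladder G k)

/-- Two vertex sets are `M`-disjoint if every pair of points (one from each) is at
graph distance at least `M`. -/
def MDisjoint (G : SimpleGraph V) (M : ℕ) (X Y : Set V) : Prop :=
  ∀ x ∈ X, ∀ y ∈ Y, M ≤ G.dist x y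

/-- `G` is `M`-fat `n`-bottlenecked: any two connected `M`-disjoint sets `X,Y` admit
at most `n` vertices (outside `X ∪ Y`) whose open `M`-neighborhood meets every `X,Y` path. -/
def FatBottlenecked (G : SimpleGraph V) (M n : ℕ) : Prop :=
  ∀ X Y : Set V, ConnSet G X → ConnSet G Y → MDisjoint G M X Y →
    ∃ S : Finset V, S.card ≤ n ∧ (∀ s ∈ S, s ∉ X ∪ Y) ∧
      ∀ ⦃x y : V⦄ (p : G.Walk x y), x ∈ X → y ∈ Y → p.IsPath →
        ∃ v ∈ p.support, ∃ s ∈ S, G.dist v s < M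

/-- An `M`-fat `n`-ladder: an `n`-ladder whose poles are `M`-disjoint and whose
rungs are pairwise `M`-disjoint. -/
structure FatLadder (G : SimpleGraph V) (M n : ℕ) extends Ladder G n where
  polesFat : MDisjoint G M X Y
  rungsFat : ∀ i j, i ≠ j → ∀ u v, u ∈ (p i).support → v ∈ (p j).support → M ≤ G.dist u v

/-- `H` is a minor of `G`: branch sets in `G` (nonempty, connected, pairwise disjoint)
realize the vertices of `H`, and every edge of `H` is realized by an edge of `G`. -/
def IsMinor {W : Type} (G : SimpleGraph V) (H : SimpleGraph W) : Prop :=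
  ∃ B : W → Set V, (∀ w, (B w).Nonempty) ∧ (∀ w, ConnSet G (B w)) ∧
    (∀ w w', w ≠ w' → Disjoint (B w) (B w')) ∧
    (∀ ⦃w w'⦄, H.Adj w w' → ∃ u ∈ B w, ∃ v ∈ B w', G.Adj u v)

/-- `H` is an `M`-fat minor of `G`: a minor whose branch sets are pairwise `M`-disjoint
except where incident (adjacent) in `H`. -/
def IsFatMinor (G : SimpleGraph V) (M : ℕ) {W : Type} (H : SimpleGraph W) : Prop :=
  ∃ B : W → Set V, (∀ w, (B w).Nonempty) ∧ (∀ w, ConnSet G (B w)) ∧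
    (∀ w w', w ≠ w' → Disjoint (B w) (B w')) ∧
    (∀ w w', w ≠ w' → ¬ H.Adj w w' → MDisjoint G M (B w) (B w')) ∧
    (∀ ⦃w w'⦄, H.Adj w w' → ∃ u ∈ B w, ∃ v ∈ B w', G.Adj u v)


private lemma dist_getVert_le' {G : SimpleGraph V} (hG : G.Connected) :
    ∀ {a b : V} (p : G.Walk a b) (t : ℕ), G.dist a (p.getVert t) ≤ t := by
  intro a b p
  induction p with
  | nil => intro t; simp [SimpleGraph.Walk.getVert, SimpleGraph.dist_self]
  | @cons u u' w h q ih =>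
    intro t
    cases t with
    | zero => simp
    | succ t =>
      rw [SimpleGraph.Walk.getVert_cons_succ]
      calc G.dist u (q.getVert t) ≤ G.dist u u' + G.dist u' (q.getVert t) :=
            hG.dist_triangle
        _ ≤ 1 + t := by
            refine add_le_add ?_ (ih t)
            simpa using SimpleGraph.dist_le h.toWalk
        _ = t + 1 := by omega

/-- In the proof of the coarse Menger-type theorem: the separating vertices
`r i` are pairwise at distance more than `2(B - m)`. -/
theorem separators_far_apart (G : SimpleGraph V) (hG : G.Connected)
    (m n M B : ℕ) (hmf : FatBottlenecked G m (n + 1))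
    (X Y : Set V) (hX : ConnSet G X) (hY : ConnSet G Y)
    (hdisj : MDisjoint G B X Y) (hB : B > 2 * (M + m + 1))
    (hno : ¬ ∃ S : Finset V, S.card ≤ n ∧
      ∀ ⦃x y : V⦄ (p : G.Walk x y), x ∈ X → y ∈ Y → p.IsPath →
        ∃ w ∈ p.support, ∃ s ∈ S, G.dist w s < B)
    (r : Fin (n + 1) → V)
    (hr : ∀ ⦃x y : V⦄ (p : G.Walk x y), x ∈ X → y ∈ Y → p.IsPath →
      ∃ w ∈ p.support, ∃ i, G.dist w (r i) < m) :
    ∀ i j, i ≠ j → 2 * (B - m) < G.dist (r i) (r j) := by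
  intro i j hij
  by_contra hlt
  push_neg at hlt
  classical
  have hn : 0 < n := by
    rcases Nat.eq_zero_or_pos n with h | h
    · subst h
      have hi := i.isLt; have hj := j.isLt
      exact absurd (Fin.ext (by omega)) hij
    · exact h
  have hmB : m < B := by omega
  set k := B - m with hk
  obtain ⟨p, hp⟩ := hG.exists_walk_length_eq_dist (r i) (r j)
  have hd : p.length ≤ 2 * k := by omega
  set t := min k p.length with ht
  set v := p.getVert t with hv
  have h1 : G.dist (r i) v ≤ k := (dist_getVert_le' hG p t).trans (min_le_left _ _)
  have h2 : G.dist (r j) v ≤ k := by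
    have h3 := dist_getVert_le' hG p.reverse (p.length - t)
    rw [SimpleGraph.Walk.getVert_reverse] at h3
    have ht2 : p.length - (p.length - t) = t := by omega
    rw [ht2] at h3
    exact h3.trans (by omega)
  set S : Finset V := insert v (((Finset.univ.erase i).erase j).image r) with hS
  apply hno
  refine ⟨S, ?_, ?_⟩
  · have hcard : (((Finset.univ : Finset (Fin (n+1))).erase i).erase j).card = n - 1 := by
      rw [Finset.card_erase_of_mem (Finset.mem_erase.mpr ⟨Ne.symm hij, Finset.mem_univ j⟩),
        Finset.card_erase_of_mem (Finset.mem_univ i), Finset.card_univ, Fintype.card_fin]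
      omega
    calc S.card ≤ (((Finset.univ.erase i).erase j).image r).card + 1 :=
          Finset.card_insert_le _ _
      _ ≤ (((Finset.univ : Finset (Fin (n+1))).erase i).erase j).card + 1 :=
          add_le_add_left (Finset.card_image_le) 1
      _ ≤ n := by omega
  · intro x y q hx hy hq
    obtain ⟨w, hw, i', hi'⟩ := hr q hx hy hq
    by_cases hcase : i' = i ∨ i' = j
    · refine ⟨w, hw, v, Finset.mem_insert_self _ _, ?_⟩
      have htr : G.dist w v ≤ G.dist w (r i') + G.dist (r i') v := hG.dist_triangle
      rcases hcase with h | h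
      · subst h; omega
      · subst h; omega
    · push_neg at hcase
      refine ⟨w, hw, r i', ?_, by omega⟩
      refine Finset.mem_insert_of_mem (Finset.mem_image_of_mem r ?_)
      exact Finset.mem_erase.mpr ⟨hcase.2, Finset.mem_erase.mpr ⟨hcase.1, Finset.mem_univ _⟩⟩
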